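/- Let f(x) = (sin(πx)/(πx))² + (d/dx[sin(πx)/(πx)])²/π². Then ∫_{-∞}^{∞} f(x) dx = 4/3 and f(0) = 1, so the ratio ‖f‖₁/f(0) = 4/3. -/

import Mathlib

open MeasureTheory Real Set

/-- The normalized sinc function `sin(πx)/(πx)`. -/
noncomputable def sincPi (x : ℝ) : ℝ :=
  if x = 0 then 1 else Real.sin (Real.pi * x) / (Real.pi * x)

/-- The "lid" of the Fejér kernel. -/
noncomputable def fejerLid (x : ℝ) : ℝ :=
  sincPi x ^ 2 + (deriv sincPi x) ^ 2 / Real.pi ^ 2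


lemma sincPi_ne (x : ℝ) (hx : x ≠ 0) : sincPi x = Real.sin (π * x) / (π * x) := if_neg hx

lemma hasDerivAt_sincPi_ne (x : ℝ) (hx : x ≠ 0) :
    HasDerivAt sincPi ((π * x * Real.cos (π * x) - Real.sin (π * x)) / (π * x ^ 2)) x := by
  have h1 : HasDerivAt (fun y : ℝ => Real.sin (π * y)) (Real.cos (π * x) * π) x := by
    have := (Real.hasDerivAt_sin (π * x)).comp x ((hasDerivAt_id x).const_mul π)
    simpa [Function.comp_def, mul_comm] using this
  have h2 : HasDerivAt (fun y : ℝ => π * y) π x := by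
    simpa using (hasDerivAt_id x).const_mul π
  have hd : HasDerivAt (fun y : ℝ => Real.sin (π * y) / (π * y))
      ((Real.cos (π * x) * π * (π * x) - Real.sin (π * x) * π) / (π * x) ^ 2) x :=
    h1.div h2 (by positivity)
  have heq : sincPi =ᶠ[nhds x] (fun y => Real.sin (π * y) / (π * y)) := by
    filter_upwards [eventually_ne_nhds hx] with y hy
    exact sincPi_ne y hy
  have h3 := hd.congr_of_eventuallyEq heq
  refine h3.congr_deriv ?_
  have hπ : (π : ℝ) ≠ 0 := Real.pi_ne_zero
  field_simp

lemma abs_cos_sub_one_le_sq (t : ℝ) : |Real.cos t - 1| ≤ t ^ 2 / 2 := by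
  have h : Real.sin (t/2) ^ 2 = 1/2 - Real.cos (2 * (t/2)) / 2 := Real.sin_sq_eq_half_sub _
  have h2 : 1 - Real.cos t = 2 * Real.sin (t/2) ^ 2 := by
    rw [h]; ring_nf
  have h3 : Real.sin (t/2) ^ 2 ≤ (t/2) ^ 2 := by
    have := Real.abs_sin_le_abs (x := t/2)
    calc Real.sin (t/2) ^2 = |Real.sin (t/2)|^2 := (sq_abs _).symm
    _ ≤ |t/2|^2 := by gcongr
    _ = (t/2)^2 := sq_abs _
  have h4 : Real.cos t - 1 ≤ 0 := by linarith [Real.cos_le_one t]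
  rw [abs_of_nonpos h4]
  nlinarith

lemma abs_sin_sub_self_le (u : ℝ) : |Real.sin u - u| ≤ u ^ 2 / 2 * |u| := by
  have key : ∀ y ∈ Set.Icc (min 0 u) (max 0 u), HasDerivAt (fun t => Real.sin t - t)
      (Real.cos y - 1) y := fun y _ => (Real.hasDerivAt_sin y).sub (hasDerivAt_id y)
  have bound : ∀ y ∈ Set.Icc (min 0 u) (max 0 u), ‖Real.cos y - 1‖ ≤ u ^ 2 / 2 := by
    intro y hy
    have h1 : |y| ≤ |u| := by
      rcases le_total 0 u with h | h
      · simp [min_eq_left, max_eq_right, h] at hy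
        rw [abs_of_nonneg hy.1, abs_of_nonneg h]; exact hy.2
      · simp [min_eq_right, max_eq_left, h] at hy
        rw [abs_of_nonpos hy.2, abs_of_nonpos h]; linarith [hy.1]
    calc ‖Real.cos y - 1‖ ≤ y ^ 2 / 2 := abs_cos_sub_one_le_sq y
    _ ≤ u ^ 2 / 2 := by
      have h2 : y^2 ≤ u^2 := by nlinarith [sq_abs y, sq_abs u, abs_nonneg y]
      linarith
  have hc : Convex ℝ (Set.Icc (min 0 u) (max 0 u)) := convex_Icc _ _
  have := hc.norm_image_sub_le_of_norm_hasDerivWithin_le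
    (fun y hy => (key y hy).hasDerivWithinAt) bound
    (Set.mem_Icc.2 ⟨min_le_left _ _, le_max_left _ _⟩)
    (Set.mem_Icc.2 ⟨min_le_right _ _, le_max_right _ _⟩)
  simpa using this

lemma hasDerivAt_sincPi_zero : HasDerivAt sincPi 0 0 := by
  rw [hasDerivAt_iff_tendsto_slope]
  have hb : ∀ x : ℝ, x ≠ 0 → |slope sincPi 0 x| ≤ π ^ 2 / 2 * |x| := by
    intro x hx
    have hπ : (0:ℝ) < π := Real.pi_pos
    rw [slope_def_field, sincPi_ne x hx]
    simp only [sincPi]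
    simp only [if_true]
    have : (Real.sin (π * x) / (π * x) - 1) / (x - 0)
        = (Real.sin (π * x) - π * x) / (π * x * x) := by
      field_simp
      ring
    rw [this, abs_div]
    have h1 := abs_sin_sub_self_le (π * x)
    have h2 : |π * x * x| = π * x ^ 2 := by
      rw [abs_mul, abs_mul, abs_of_nonneg hπ.le, mul_assoc, ← abs_mul,
        show x * x = x^2 by ring, abs_of_nonneg (sq_nonneg x)]
    rw [h2, div_le_iff₀ (by positivity)]
    calc |Real.sin (π * x) - π * x| ≤ (π * x) ^ 2 / 2 * |π * x| := h1
    _ = π ^ 2 / 2 * |x| * (π * x ^ 2) := by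
        rw [abs_mul, abs_of_nonneg hπ.le, mul_pow,
          show x ^ 2 = |x| * |x| by rw [← abs_mul, ← sq, abs_of_nonneg (sq_nonneg x)]]
        ring
  have : Filter.Tendsto (fun x : ℝ => π ^ 2 / 2 * |x|) (nhdsWithin 0 {(0:ℝ)}ᶜ) (nhds 0) := by
    have : Filter.Tendsto (fun x : ℝ => π ^ 2 / 2 * |x|) (nhds 0) (nhds 0) := by
      have h : Continuous (fun x : ℝ => π ^ 2 / 2 * |x|) := continuous_const.mul continuous_abs
      simpa using h.tendsto (0:ℝ)
    exact this.mono_left nhdsWithin_le_nhds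
  refine squeeze_zero_norm' ?_ this
  filter_upwards [self_mem_nhdsWithin] with x hx
  exact hb x hx

lemma deriv_sincPi_zero : deriv sincPi 0 = 0 := hasDerivAt_sincPi_zero.deriv

lemma deriv_sincPi_ne (x : ℝ) (hx : x ≠ 0) :
    deriv sincPi x = (π * x * Real.cos (π * x) - Real.sin (π * x)) / (π * x ^ 2) :=
  (hasDerivAt_sincPi_ne x hx).deriv

lemma fejerLid_zero : fejerLid 0 = 1 := by
  simp [fejerLid, deriv_sincPi_zero, sincPi]

lemma fejerLid_ne (x : ℝ) (hx : x ≠ 0) :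
    fejerLid x = ((π*x)^2 - (π*x) * Real.sin (2*(π*x)) + Real.sin (π*x)^2) / (π*x)^4 := by
  have hπ : (0:ℝ) < π := Real.pi_pos
  rw [fejerLid, sincPi_ne x hx, deriv_sincPi_ne x hx, Real.sin_two_mul]
  have hs := Real.sin_sq_add_cos_sq (π * x)
  field_simp
  linear_combination (π^2*x^2) * hs

lemma fejerLid_nonneg (x : ℝ) : 0 ≤ fejerLid x :=
  add_nonneg (sq_nonneg _) (div_nonneg (sq_nonneg _) (sq_nonneg _))

lemma abs_mul_cos_sub_sin_le (u : ℝ) : |u * Real.cos u - Real.sin u| ≤ u ^ 2 * |u| := by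
  have key : ∀ y ∈ Set.Icc (min 0 u) (max 0 u), HasDerivAt (fun t => t * Real.cos t - Real.sin t)
      (-(y * Real.sin y)) y := by
    intro y _
    have h := ((hasDerivAt_id y).mul (Real.hasDerivAt_cos y)).sub (Real.hasDerivAt_sin y)
    refine h.congr_deriv ?_; simp
  have bound : ∀ y ∈ Set.Icc (min 0 u) (max 0 u), ‖-(y * Real.sin y)‖ ≤ u ^ 2 := by
    intro y hy
    have h1 : |y| ≤ |u| := by
      rcases le_total 0 u with h | h
      · simp [min_eq_left, max_eq_right, h] at hy
        rw [abs_of_nonneg hy.1, abs_of_nonneg h]; exact hy.2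
      · simp [min_eq_right, max_eq_left, h] at hy
        rw [abs_of_nonpos hy.2, abs_of_nonpos h]; linarith [hy.1]
    have h2 := Real.abs_sin_le_abs (x := y)
    calc ‖-(y * Real.sin y)‖ = |y| * |Real.sin y| := by rw [norm_neg, Real.norm_eq_abs, abs_mul]
    _ ≤ |u| * |u| := mul_le_mul h1 (h2.trans h1) (abs_nonneg _) (abs_nonneg _)
    _ = u ^ 2 := by rw [← abs_mul, ← sq, abs_of_nonneg (sq_nonneg u)]
  have hc : Convex ℝ (Set.Icc (min 0 u) (max 0 u)) := convex_Icc _ _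
  have := hc.norm_image_sub_le_of_norm_hasDerivWithin_le
    (fun y hy => (key y hy).hasDerivWithinAt) bound
    (Set.mem_Icc.2 ⟨min_le_left _ _, le_max_left _ _⟩)
    (Set.mem_Icc.2 ⟨min_le_right _ _, le_max_right _ _⟩)
  simpa using this

lemma fejerLid_le (x : ℝ) : fejerLid x ≤ 2*(1+π^2) * (1+x^2)⁻¹ := by
  have hπ : (0:ℝ) < π := Real.pi_pos
  have hπ3 : (3:ℝ) < π := Real.pi_gt_three
  have hx2 : (0:ℝ) < 1 + x^2 := by positivity
  rcases le_or_gt |x| 1 with h1 | h1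
  · have hxx : x^2 ≤ 1 := by nlinarith [sq_abs x, abs_nonneg x]
    have hb : fejerLid x ≤ 1 + π^2 := by
      rcases eq_or_ne x 0 with rfl | hx
      · rw [fejerLid_zero]; nlinarith
      · rw [fejerLid, sincPi_ne x hx, deriv_sincPi_ne x hx]
        have hs' : |Real.sin (π*x)| ≤ |π*x| := Real.abs_sin_le_abs
        have hb' := abs_mul_cos_sub_sin_le (π*x)
        have hx0 : (0:ℝ) < x^2 := by positivity
        have e1 : (Real.sin (π*x) / (π*x))^2 ≤ 1 := by
          rw [div_pow]
          rw [div_le_one (by positivity)]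
          nlinarith [sq_abs (Real.sin (π*x)), sq_abs (π*x), abs_nonneg (Real.sin (π*x)), abs_nonneg (π*x)]
        have e2 : ((π * x * Real.cos (π * x) - Real.sin (π * x)) / (π * x ^ 2))^2 / π^2 ≤ π^2 := by
          rw [div_pow, div_div, div_le_iff₀ (by positivity)]
          have h6 : (π * x * Real.cos (π * x) - Real.sin (π * x))^2 ≤ ((π*x)^2 * |π*x|)^2 := by
            nlinarith [sq_abs (π * x * Real.cos (π * x) - Real.sin (π * x)),
              abs_nonneg (π * x * Real.cos (π * x) - Real.sin (π * x)), abs_nonneg (π*x),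
              sq_nonneg (π*x)]
          have h7 : ((π*x)^2 * |π*x|)^2 = π^6 * x^4 * x^2 := by
            rw [mul_pow, sq_abs]; ring
          nlinarith [sq_nonneg (π*x), pow_pos hπ 6, sq_nonneg x, mul_pos (pow_pos hπ 6) hx0]
        nlinarith [e1, e2]
    rw [← div_eq_mul_inv, le_div_iff₀ hx2]
    nlinarith [fejerLid_nonneg x, Real.pi_pos]
  · have hx : x ≠ 0 := by rintro rfl; norm_num at h1
    have hxx : 1 ≤ x^2 := by nlinarith [sq_abs x]
    rw [fejerLid_ne x hx, ← div_eq_mul_inv, div_le_div_iff₀ (by positivity) hx2]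
    have hs1 : |Real.sin (2*(π*x))| ≤ 1 := Real.abs_sin_le_one _
    have hs2 : Real.sin (π*x)^2 ≤ 1 := by nlinarith [Real.abs_sin_le_one (π*x), abs_nonneg (Real.sin (π*x)), sq_abs (Real.sin (π*x))]
    have hax : |x| ≤ x^2 := by nlinarith [sq_abs x]
    have h8 : -(π*x*Real.sin (2*(π*x))) ≤ π * x^2 := by
      have : |π*x*Real.sin (2*(π*x))| ≤ π * |x| := by
        rw [abs_mul, abs_mul, abs_of_nonneg hπ.le]
        nlinarith [abs_nonneg x, abs_nonneg (Real.sin (2*(π*x))),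
          mul_le_mul_of_nonneg_left hs1 (mul_nonneg hπ.le (abs_nonneg x))]
      nlinarith [neg_abs_le (π*x*Real.sin (2*(π*x))), abs_nonneg x]
    have hN : (π * x)^2 - π*x*Real.sin (2*(π*x)) + Real.sin (π*x)^2 ≤ (π^2+π+1)*x^2 := by
      nlinarith [h8, hs2, hxx]
    have hc : π^2+π+1 ≤ (1+π^2)*π^4 := by nlinarith [hπ3, sq_nonneg π, pow_pos hπ 4, sq_nonneg (π-3), sq_nonneg (π^2-3)]
    have hx4 : (0:ℝ) ≤ x^4 := by positivity
    calc ((π * x)^2 - π*x*Real.sin (2*(π*x)) + Real.sin (π*x)^2) * (1+x^2)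
        ≤ ((π^2+π+1)*x^2) * (1+x^2) := by
          apply mul_le_mul_of_nonneg_right hN hx2.le
      _ ≤ ((π^2+π+1)*x^2) * (2*x^2) := by
          have h9 : (1+x^2) ≤ 2*x^2 := by linarith
          have h10 : (0:ℝ) ≤ (π^2+π+1)*x^2 := by positivity
          exact mul_le_mul_of_nonneg_left h9 h10
      _ = 2*(π^2+π+1)*x^4 := by ring
      _ ≤ 2*((1+π^2)*π^4)*x^4 := by nlinarith [mul_le_mul_of_nonneg_right hc hx4]
      _ = 2*(1+π^2)*(π*x)^4 := by ring

lemma continuous_sincPi : Continuous sincPi := by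
  rw [continuous_iff_continuousAt]
  intro x
  rcases eq_or_ne x 0 with rfl | hx
  · exact hasDerivAt_sincPi_zero.differentiableAt.continuousAt
  · exact (hasDerivAt_sincPi_ne x hx).differentiableAt.continuousAt

lemma measurable_fejerLid : Measurable fejerLid := by
  have h1 : Measurable (deriv sincPi) := measurable_deriv _
  exact (continuous_sincPi.measurable.pow_const 2).add ((h1.pow_const 2).div_const _)

lemma integrable_fejerLid : Integrable fejerLid := by
  have hb : Integrable (fun x : ℝ => 2*(1+π^2) * (1+x^2)⁻¹) :=
    integrable_inv_one_add_sq.const_mul _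
  refine hb.mono' measurable_fejerLid.aestronglyMeasurable ?_
  filter_upwards with x
  rw [Real.norm_eq_abs, abs_of_nonneg (fejerLid_nonneg x)]
  exact fejerLid_le x


noncomputable def Phi (c : ℂ) (A B : ℝ) (t : ℝ) : ℂ :=
  Complex.exp (c * t) *
    ((((A:ℂ)*t^3 + B*t + 2) * c^3 - (3*A*t^2 + B) * c^2 + 6*A*t*c - 6*A) / c^4)

lemma hasDerivAt_Phi (c : ℂ) (hc : c ≠ 0) (A B : ℝ) (t : ℝ) :
    HasDerivAt (Phi c A B) (((A:ℂ)*t^3 + B*t + 2) * Complex.exp (c * t)) t := by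
  have main : ∀ z : ℂ, HasDerivAt (fun z : ℂ =>
      Complex.exp (c * z) *
        ((((A:ℂ)*z^3 + B*z + 2) * c^3 - (3*A*z^2 + B) * c^2 + 6*A*z*c - 6*A) / c^4))
      (((A:ℂ)*z^3 + B*z + 2) * Complex.exp (c * z)) z := by
    intro z
    have he : HasDerivAt (fun z : ℂ => Complex.exp (c * z)) (Complex.exp (c * z) * c) z := by
      have := (Complex.hasDerivAt_exp (c * z)).comp z ((hasDerivAt_id z).const_mul c)
      simpa [Function.comp_def, mul_comm] using this
    have hq : HasDerivAt (fun z : ℂ =>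
        (((A:ℂ)*z^3 + B*z + 2) * c^3 - (3*A*z^2 + B) * c^2 + 6*A*z*c - 6*A) / c^4)
        (((3*(A:ℂ)*z^2 + B) * c^3 - (6*A*z) * c^2 + 6*A*c) / c^4) z := by
      apply HasDerivAt.div_const
      have h3 : HasDerivAt (fun z : ℂ => ((A:ℂ)*z^3 + B*z + 2) * c^3) ((3*(A:ℂ)*z^2 + B) * c^3) z := by
        apply HasDerivAt.mul_const
        have := (((hasDerivAt_pow 3 z).const_mul (A:ℂ)).add
          ((hasDerivAt_id z).const_mul (B:ℂ))).add_const 2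
        refine this.congr_deriv ?_
        simp; ring
      have h2 : HasDerivAt (fun z : ℂ => (3*(A:ℂ)*z^2 + B) * c^2) (6*(A:ℂ)*z * c^2) z := by
        apply HasDerivAt.mul_const
        have := ((hasDerivAt_pow 2 z).const_mul ((3:ℂ)*A)).add_const (B:ℂ)
        refine this.congr_deriv ?_
        simp; ring
      have h1 : HasDerivAt (fun z : ℂ => 6*(A:ℂ)*z*c) (6*(A:ℂ)*c) z := by
        have h := (hasDerivAt_id z).const_mul ((6:ℂ)*(A:ℂ)*c)
        have heq : (fun z : ℂ => 6*(A:ℂ)*z*c) = fun z : ℂ => 6*(A:ℂ)*c * id z := by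
          funext y; simp [id]; ring
        rw [heq]
        simpa using h
      exact ((h3.sub h2).add h1).sub_const _
    have := he.mul hq
    refine this.congr_deriv ?_
    field_simp
    ring
  have := (main t).comp_ofReal
  exact this

lemma integral_cubic_exp (c : ℂ) (hc : c ≠ 0) (A B a b : ℝ) :
    (∫ ξ in a..b, ((A:ℂ)*ξ^3 + B*ξ + 2) * Complex.exp (c * ξ))
      = Phi c A B b - Phi c A B a := by
  apply intervalIntegral.integral_eq_sub_of_hasDerivAt
    (fun t _ => hasDerivAt_Phi c hc A B t)
  apply Continuous.intervalIntegrable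
  fun_prop

noncomputable def wfn (ξ : ℝ) : ℝ := 2/3 * (max (1 - |ξ|) 0)^2 * (|ξ| + 2)

lemma continuous_wfn : Continuous wfn := by unfold wfn; fun_prop

lemma wfn_zero : wfn 0 = 4/3 := by norm_num [wfn]

lemma wfn_eq_zero (ξ : ℝ) (h : 1 ≤ |ξ|) : wfn ξ = 0 := by
  have : max (1 - |ξ|) 0 = 0 := max_eq_right (by linarith)
  simp [wfn, this]

lemma wfn_of_nonneg (ξ : ℝ) (h0 : 0 ≤ ξ) (h1 : ξ ≤ 1) : wfn ξ = 2/3 * (ξ^3 - 3*ξ + 2) := by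
  rw [wfn, abs_of_nonneg h0, max_eq_left (by linarith)]
  ring

lemma wfn_of_nonpos (ξ : ℝ) (h0 : ξ ≤ 0) (h1 : -1 ≤ ξ) : wfn ξ = 2/3 * (-ξ^3 + 3*ξ + 2) := by
  rw [wfn, abs_of_nonpos h0, max_eq_left (by linarith)]
  ring

lemma integral_cubic (A B a b : ℝ) :
    (∫ ξ in a..b, ((A:ℂ)*ξ^3 + B*ξ + 2))
      = ((A:ℂ)*b^4/4 + B*b^2/2 + 2*b) - ((A:ℂ)*a^4/4 + B*a^2/2 + 2*a) := by
  apply intervalIntegral.integral_eq_sub_of_hasDerivAt (f := fun t : ℝ => (A:ℂ)*t^4/4 + B*t^2/2 + 2*t)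
  · intro t _
    have main : HasDerivAt (fun z : ℂ => (A:ℂ)*z^4/4 + B*z^2/2 + 2*z)
        ((A:ℂ)*t^3 + B*t + 2) (t:ℂ) := by
      have h4 : HasDerivAt (fun z : ℂ => (A:ℂ)*z^4/4) ((A:ℂ)*(t:ℂ)^3) (t:ℂ) := by
        have := ((hasDerivAt_pow 4 (t:ℂ)).const_mul (A:ℂ)).div_const 4
        refine this.congr_deriv ?_
        simp; ring
      have h2 : HasDerivAt (fun z : ℂ => (B:ℂ)*z^2/2) ((B:ℂ)*(t:ℂ)) (t:ℂ) := by
        have := ((hasDerivAt_pow 2 (t:ℂ)).const_mul (B:ℂ)).div_const 2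
        refine this.congr_deriv ?_
        simp; ring
      have h1 : HasDerivAt (fun z : ℂ => (2:ℂ)*z) (2:ℂ) (t:ℂ) := by
        simpa using (hasDerivAt_id (t:ℂ)).const_mul (2:ℂ)
      exact (h4.add h2).add h1
    exact main.comp_ofReal
  · apply Continuous.intervalIntegrable; fun_prop

lemma fourierInv_wfn (x : ℝ) :
    FourierTransformInv.fourierInv (fun ξ : ℝ => ((wfn ξ : ℝ) : ℂ)) x = ((fejerLid x : ℝ) : ℂ) := by
  rw [Real.fourierInv_eq_fourier_neg, Real.fourier_real_eq_integral_exp_smul]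
  set c : ℂ := ((2*π*x : ℝ) : ℂ) * Complex.I with hc
  have hint : (∫ v : ℝ, Complex.exp (((-2 * π * v * -x : ℝ) : ℂ) * Complex.I) • ((wfn v : ℝ) : ℂ))
      = ∫ v : ℝ, ((wfn v : ℝ) : ℂ) * Complex.exp (c * v) := by
    have harg : ∀ v : ℝ, (((-2 * π * v * -x : ℝ) : ℂ) * Complex.I) = c * v := by
      intro v; rw [hc]; push_cast; ring
    congr 1; funext v
    rw [smul_eq_mul, mul_comm, harg v]
  rw [hint]
  have hsupp : Function.support (fun v : ℝ => ((wfn v : ℝ) : ℂ) * Complex.exp (c * v))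
      ⊆ Set.Ioc (-1 : ℝ) 1 := by
    intro v hv
    by_contra hmem
    apply hv
    have h1 : (1:ℝ) ≤ |v| := by
      simp only [Set.mem_Ioc, not_and_or, not_lt, not_le] at hmem
      rcases hmem with h | h
      · rw [abs_of_nonpos (by linarith)]; linarith
      · rw [abs_of_nonneg (by linarith)]; linarith
    simp [wfn_eq_zero v h1]
  rw [← intervalIntegral.integral_eq_integral_of_support_subset hsupp]
  have hcont : Continuous (fun v : ℝ => ((wfn v : ℝ) : ℂ) * Complex.exp (c * v)) := by
    apply Continuous.mul
    · exact Complex.continuous_ofReal.comp continuous_wfn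
    · fun_prop
  have hsplit := intervalIntegral.integral_add_adjacent_intervals (μ := volume) (a := (-1:ℝ)) (b := 0) (c := 1)
    (hcont.intervalIntegrable _ _) (hcont.intervalIntegrable _ _)
  rw [← hsplit]
  have hI1 : (∫ v in (-1:ℝ)..0, ((wfn v : ℝ) : ℂ) * Complex.exp (c * v))
      = (2/3 : ℂ) * ∫ v in (-1:ℝ)..0, (((-1:ℝ):ℂ)*v^3 + (3:ℝ)*v + 2) * Complex.exp (c * v) := by
    rw [← intervalIntegral.integral_const_mul]
    apply intervalIntegral.integral_congr
    intro v hv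
    rw [Set.uIcc_of_le (by norm_num : (-1:ℝ) ≤ 0)] at hv
    show ((wfn v : ℝ) : ℂ) * Complex.exp (c * v) = _
    rw [wfn_of_nonpos v hv.2 hv.1]
    push_cast
    ring
  have hI2 : (∫ v in (0:ℝ)..1, ((wfn v : ℝ) : ℂ) * Complex.exp (c * v))
      = (2/3 : ℂ) * ∫ v in (0:ℝ)..1, (((1:ℝ):ℂ)*v^3 + (-3:ℝ)*v + 2) * Complex.exp (c * v) := by
    rw [← intervalIntegral.integral_const_mul]
    apply intervalIntegral.integral_congr
    intro v hv
    rw [Set.uIcc_of_le (by norm_num : (0:ℝ) ≤ 1)] at hv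
    show ((wfn v : ℝ) : ℂ) * Complex.exp (c * v) = _
    rw [wfn_of_nonneg v hv.1 hv.2]
    push_cast
    ring
  rcases eq_or_ne x 0 with rfl | hx
  · rw [hI1, hI2]
    have hc0 : c = 0 := by simp [hc]
    simp only [hc0, zero_mul, Complex.exp_zero, mul_one]
    rw [integral_cubic, integral_cubic, fejerLid_zero]
    norm_num
  · have hcne : c ≠ 0 := by
      rw [hc]
      apply mul_ne_zero _ Complex.I_ne_zero
      rw [Complex.ofReal_ne_zero]
      exact mul_ne_zero (mul_ne_zero two_ne_zero Real.pi_ne_zero) hx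
    rw [hI1, hI2, integral_cubic_exp c hcne, integral_cubic_exp c hcne, fejerLid_ne x hx]
    have hu : ((π*x : ℝ) : ℂ) ≠ 0 := by
      rw [Complex.ofReal_ne_zero]
      exact mul_ne_zero Real.pi_ne_zero hx
    have hcc : c = 2*((π*x:ℝ):ℂ)*Complex.I := by rw [hc]; push_cast; ring
    have hsq : Real.sin (π*x)^2 = 1/2 - Real.cos (2*(π*x))/2 := Real.sin_sq_eq_half_sub _
    have hsq : Real.sin (π*x)^2 = 1/2 - Real.cos (2*(π*x))/2 := Real.sin_sq_eq_half_sub _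
    simp only [Phi, hsq, hcc]
    have hI : Complex.I ^ 2 = -1 := Complex.I_sq
    have hE0 : Complex.exp (2 * ((π*x:ℝ):ℂ) * Complex.I * ((0:ℝ):ℂ)) = 1 := by
      norm_num
    have hE1 : Complex.exp (2 * ((π*x:ℝ):ℂ) * Complex.I * ((1:ℝ):ℂ))
        = Complex.cos (2*((π*x:ℝ):ℂ)) + Complex.sin (2*((π*x:ℝ):ℂ)) * Complex.I := by
      rw [show 2 * ((π*x:ℝ):ℂ) * Complex.I * ((1:ℝ):ℂ) = (2*((π*x:ℝ):ℂ)) * Complex.I by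
        push_cast; ring, Complex.exp_mul_I]
    have hE2 : Complex.exp (2 * ((π*x:ℝ):ℂ) * Complex.I * ((-1:ℝ):ℂ))
        = Complex.cos (2*((π*x:ℝ):ℂ)) - Complex.sin (2*((π*x:ℝ):ℂ)) * Complex.I := by
      rw [show 2 * ((π*x:ℝ):ℂ) * Complex.I * ((-1:ℝ):ℂ) = (-(2*((π*x:ℝ):ℂ))) * Complex.I by
        push_cast; ring, Complex.exp_mul_I, Complex.cos_neg, Complex.sin_neg]
      ring
    have hc2 : (2 * ((π*x:ℝ):ℂ) * Complex.I)^2 = -4 * ((π*x:ℝ):ℂ)^2 := by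
      rw [mul_pow, hI]; ring
    have hc3 : (2 * ((π*x:ℝ):ℂ) * Complex.I)^3 = -8 * ((π*x:ℝ):ℂ)^3 * Complex.I := by
      rw [pow_succ, hc2]; ring
    have hc4 : (2 * ((π*x:ℝ):ℂ) * Complex.I)^4 = 16 * ((π*x:ℝ):ℂ)^4 := by
      rw [show (4:ℕ) = 2*2 from rfl, pow_mul, hc2]; ring
    rw [hE0, hE1, hE2, hc2, hc3, hc4]
    have hπc : ((π:ℝ):ℂ) ≠ 0 := by rw [Complex.ofReal_ne_zero]; exact Real.pi_ne_zero
    have hxc : ((x:ℝ):ℂ) ≠ 0 := by rw [Complex.ofReal_ne_zero]; exact hx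
    push_cast
    field_simp
    ring_nf
    linear_combination (96 * ((π:ℝ):ℂ) * ((x:ℝ):ℂ) * Complex.sin (((π:ℝ):ℂ) * ((x:ℝ):ℂ) * 2)) * hI

lemma fejerLid_even (x : ℝ) : fejerLid (-x) = fejerLid x := by
  rcases eq_or_ne x 0 with rfl | hx
  · norm_num
  · rw [fejerLid_ne (-x) (neg_ne_zero.mpr hx), fejerLid_ne x hx,
      show π * -x = -(π*x) by ring, show (2:ℝ) * -(π*x) = -(2*(π*x)) by ring,
      Real.sin_neg, Real.sin_neg]
    ring

lemma integrable_W : Integrable (fun ξ : ℝ => ((wfn ξ : ℝ) : ℂ)) := by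
  apply Continuous.integrable_of_hasCompactSupport
  · exact Complex.continuous_ofReal.comp continuous_wfn
  · apply HasCompactSupport.intro (isCompact_Icc (a := (-1:ℝ)) (b := 1))
    intro ξ hξ
    have : 1 ≤ |ξ| := by
      simp only [Set.mem_Icc, not_and_or, not_le] at hξ
      rcases hξ with h | h
      · rw [abs_of_nonpos (by linarith)]; linarith
      · rw [abs_of_nonneg (by linarith)]; linarith
    simp [wfn_eq_zero ξ this]

lemma integrable_FC : Integrable (fun x : ℝ => ((fejerLid x : ℝ) : ℂ)) :=
  integrable_fejerLid.ofReal

lemma integral_fejerLid : (∫ x : ℝ, fejerLid x) = 4 / 3 := by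
  have h𝓕inv : FourierTransformInv.fourierInv (fun ξ : ℝ => ((wfn ξ : ℝ) : ℂ))
      = fun x : ℝ => ((fejerLid x : ℝ) : ℂ) := funext fourierInv_wfn
  have h𝓕W : FourierTransform.fourier (fun ξ : ℝ => ((wfn ξ : ℝ) : ℂ))
      = fun x : ℝ => ((fejerLid x : ℝ) : ℂ) := by
    funext x
    have := Real.fourierInv_eq_fourier_neg
      (fun ξ : ℝ => ((wfn ξ : ℝ) : ℂ)) (-x)
    rw [neg_neg] at this
    rw [← this, fourierInv_wfn, fejerLid_even]
  have hint : Integrable (FourierTransform.fourier (fun ξ : ℝ => ((wfn ξ : ℝ) : ℂ))) := by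
    rw [h𝓕W]; exact integrable_FC
  have hv : ContinuousAt (fun ξ : ℝ => ((wfn ξ : ℝ) : ℂ)) 0 :=
    (Complex.continuous_ofReal.comp continuous_wfn).continuousAt
  have key := MeasureTheory.Integrable.fourier_fourierInv_eq integrable_W hint hv
  rw [h𝓕inv] at key
  have h0 : FourierTransform.fourier (fun x : ℝ => ((fejerLid x : ℝ) : ℂ)) 0
      = ∫ x : ℝ, ((fejerLid x : ℝ) : ℂ) := by
    rw [Real.fourier_real_eq]
    simp
  rw [h0] at key
  have h1 : ((∫ x : ℝ, fejerLid x : ℝ) : ℂ) = ((4/3 : ℝ) : ℂ) := by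
    calc ((∫ x : ℝ, fejerLid x : ℝ) : ℂ)
        = ∫ x : ℝ, ((fejerLid x : ℝ) : ℂ) := integral_ofReal.symm
      _ = ((wfn 0 : ℝ) : ℂ) := key
      _ = ((4/3 : ℝ) : ℂ) := by rw [wfn_zero]
  exact_mod_cast h1


theorem fejer_lid_integral :
    (∫ x : ℝ, fejerLid x) = 4 / 3 ∧ fejerLid 0 = 1 ∧
      (∫ x : ℝ, |fejerLid x|) / fejerLid 0 = 4 / 3 := by
  refine ⟨integral_fejerLid, fejerLid_zero, ?_⟩
  have h : (∫ x : ℝ, |fejerLid x|) = ∫ x : ℝ, fejerLid x := by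
    congr 1; funext x; exact abs_of_nonneg (fejerLid_nonneg x)
  rw [h, integral_fejerLid, fejerLid_zero]
  norm_num
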